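/- Let (W,S) be a Coxeter system and let M be an H-module with basis X supporting a W-digraph Γ. Let v = Σ_{γ ∈ X} λ_γ γ ∈ M and s ∈ S. Then: (i) T_s·v = u²v if and only if λ_β = λ_α whenever Γ has an edge (solid or dashed) from α to β labeled s; (ii) T_s·v = −v if and only if λ_β = −u^{-2}λ_α whenever Γ has a solid edge from α to β labeled s, and λ_β = −(u+1)(u²−u)^{-1}λ_α whenever Γ has a dashed edge from α to β labeled s. -/

import Mathlib

open Finsupp

set_option synthInstance.maxHeartbeats 1000000
set_option maxHeartbeats 1000000

noncomputable section

/-- The field `ℚ(u)` of rational functions. -/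
abbrev Kq : Type := RatFunc ℚ

/-- The indeterminate `u`. -/
def uu : Kq := RatFunc.X

/-- An `S`-labeled digraph on vertex type `V` with labels in `B`:
`Edge a b s d` means there is an edge from `a` to `b` labeled `s`, which is
dashed if `d = true` and solid if `d = false`.  There are no loops, and every
vertex occurs in exactly one edge with any given label. -/
structure SLabeledDigraph (V B : Type*) where
  Edge : V → V → B → Bool → Prop
  no_loop : ∀ v s d, ¬ Edge v v s d
  unique_edge : ∀ v s, ∃! e : V × V × Bool,
    (e.1 = v ∨ e.2.1 = v) ∧ Edge e.1 e.2.1 s e.2.2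

namespace SLabeledDigraph

variable {V B : Type*} (Γ : SLabeledDigraph V B)

/-- Swap the endpoints of an edge datum. -/
def eswap {V : Type*} (e : V × V × Bool) : V × V × Bool := (e.2.1, e.1, e.2.2)

/-- The reversed digraph `Γ_rev`, with all edge directions reversed but types
and labels kept. -/
def rev : SLabeledDigraph V B where
  Edge a b s d := Γ.Edge b a s d
  no_loop v s d := Γ.no_loop v s d
  unique_edge v s := by
    obtain ⟨e, ⟨hinc, hedge⟩, huniq⟩ := Γ.unique_edge v s
    refine ⟨eswap e, ⟨Or.symm hinc, hedge⟩, ?_⟩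
    rintro e' ⟨hinc', hedge'⟩
    have h1 : eswap e' = e := huniq (eswap e') ⟨Or.symm hinc', hedge'⟩
    calc e' = eswap (eswap e') := rfl
    _ = eswap e := by rw [h1]

/-- The restriction `Γ_J`: same vertices, only edges with labels in `J`. -/
def restrict (J : Set B) : SLabeledDigraph V J where
  Edge a b s d := Γ.Edge a b s.1 d
  no_loop v s d := Γ.no_loop v s.1 d
  unique_edge v s := Γ.unique_edge v s.1

/-- Directed adjacency (ignoring labels and edge types). -/
def DAdj (a b : V) : Prop := ∃ s d, Γ.Edge a b s d

/-- Undirected adjacency. -/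
def UAdj (a b : V) : Prop := Γ.DAdj a b ∨ Γ.DAdj b a

/-- `Γ` is connected if any two vertices are joined by an undirected path. -/
def Connected : Prop := ∀ a b : V, Relation.ReflTransGen Γ.UAdj a b

/-- A source is a vertex at which no edge ends. -/
def IsSource (a : V) : Prop := ∀ b s d, ¬ Γ.Edge b a s d

/-- A sink is a vertex at which no edge begins. -/
def IsSink (a : V) : Prop := ∀ b s d, ¬ Γ.Edge a b s d

/-- `Γ` is acyclic if it has no nonempty directed circuit. -/
def Acyclic : Prop := ∀ a : V, ¬ Relation.TransGen Γ.DAdj a a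

/-- The setoid whose classes are the connected components of `Γ`. -/
def compSetoid : Setoid V :=
  ⟨Relation.ReflTransGen Γ.UAdj,
    ⟨fun _ => Relation.ReflTransGen.refl,
     fun h => (letI : Std.Symm Γ.UAdj := ⟨fun _ _ hab => Or.symm hab⟩; Std.Symm.symm _ _ h),
     fun h1 h2 => Relation.ReflTransGen.trans h1 h2⟩⟩

end SLabeledDigraph

/-- The Hecke algebra of a Coxeter system over `ℚ(u)`: an associative
`ℚ(u)`-algebra `H` with basis `{T_w : w ∈ W}` such that `T_1 = 1` and
`T_s T_w = T_{sw}` if `ℓ(sw) > ℓ(w)`, while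
`T_s T_w = u² T_{sw} + (u² - 1) T_w` if `ℓ(sw) < ℓ(w)`. -/
structure HeckeAlgebra {B W : Type*} [Group W] {M : CoxeterMatrix B}
    (cs : CoxeterSystem M W) (H : Type*) [Ring H] [Algebra Kq H] where
  T : W → H
  basis : Module.Basis W Kq H
  basis_eq : ∀ w, basis w = T w
  T_one : T 1 = 1
  T_mul_of_lt : ∀ (i : B) (w : W), cs.length w < cs.length (cs.simple i * w) →
    T (cs.simple i) * T w = T (cs.simple i * w)
  T_mul_of_gt : ∀ (i : B) (w : W), cs.length (cs.simple i * w) < cs.length w →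
    T (cs.simple i) * T w = (uu ^ 2) • T (cs.simple i * w) + (uu ^ 2 - 1) • T w

variable {B W : Type*} [Group W] {M : CoxeterMatrix B}
variable {H : Type*} [Ring H] [Algebra Kq H]

/-- `ρ` is the representation of `H` on `M(Γ)` (the `ℚ(u)`-vector space with
basis the vertices of `Γ`) in which each `T_s` acts by the operator `τ_s`
determined by the edges of `Γ`. -/
def WDigraphRep {V : Type*} (cs : CoxeterSystem M W) (ha : HeckeAlgebra cs H)
    (Γ : SLabeledDigraph V B)
    (ρ : H →ₐ[Kq] Module.End Kq (V →₀ Kq)) : Prop :=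
  ∀ (a b : V) (i : B),
    (Γ.Edge a b i false →
      ρ (ha.T (cs.simple i)) (single a (1 : Kq)) = single b (1 : Kq) ∧
      ρ (ha.T (cs.simple i)) (single b (1 : Kq))
        = (uu ^ 2 - 1) • single b (1 : Kq) + (uu ^ 2) • single a (1 : Kq)) ∧
    (Γ.Edge a b i true →
      ρ (ha.T (cs.simple i)) (single a (1 : Kq)) = uu • single a (1 : Kq) + (uu + 1) • single b (1 : Kq) ∧
      ρ (ha.T (cs.simple i)) (single b (1 : Kq))
        = (uu ^ 2 - uu - 1) • single b (1 : Kq) + (uu ^ 2 - uu) • single a (1 : Kq))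

/-- `Γ` is a `W`-digraph: the assignment `T_s ↦ τ_s` extends to a
representation of `H` on `M(Γ)`. -/
def IsWDigraph {V : Type*} (cs : CoxeterSystem M W) (ha : HeckeAlgebra cs H)
    (Γ : SLabeledDigraph V B) : Prop :=
  ∃ ρ : H →ₐ[Kq] Module.End Kq (V →₀ Kq), WDigraphRep cs ha Γ ρ


section EigenAux

lemma uu_ne_zero : uu ≠ 0 := RatFunc.X_ne_zero

lemma poly_ne_zero' (p : Polynomial ℚ) (hp : p ≠ 0) :
    algebraMap (Polynomial ℚ) (RatFunc ℚ) p ≠ 0 := fun h =>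
  hp ((map_eq_zero_iff _ (RatFunc.algebraMap_injective ℚ)).mp h)

lemma uu_sub_one_ne_zero : uu - 1 ≠ 0 := by
  have := poly_ne_zero' (Polynomial.X - 1)
    (by intro h; simpa using congrArg (Polynomial.eval 0) h)
  rw [map_sub, map_one, RatFunc.algebraMap_X] at this
  exact this

lemma uu_add_one_ne_zero : uu + 1 ≠ 0 := by
  have := poly_ne_zero' (Polynomial.X + 1)
    (by intro h; simpa using congrArg (Polynomial.eval 1) h)
  rw [map_add, map_one, RatFunc.algebraMap_X] at this
  exact this

lemma uu_sq_ne_zero : uu ^ 2 ≠ 0 := pow_ne_zero _ uu_ne_zero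

lemma uu_sq_sub_uu_ne_zero : uu ^ 2 - uu ≠ 0 := by
  have h : uu ^ 2 - uu = uu * (uu - 1) := by ring
  rw [h]
  exact mul_ne_zero uu_ne_zero uu_sub_one_ne_zero

variable {V : Type*} {cs : CoxeterSystem M W} {ha : HeckeAlgebra cs H}
  {Γ : SLabeledDigraph V B} {ρ : H →ₐ[Kq] Module.End Kq (V →₀ Kq)}

lemma edge_unique {i : B} {a b c p q : V} {d e : Bool}
    (hab : Γ.Edge a b i d) (hpq : Γ.Edge p q i e)
    (hc1 : c = a ∨ c = b) (hc2 : p = c ∨ q = c) :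
    p = a ∧ q = b ∧ e = d := by
  obtain ⟨E, -, huniq⟩ := Γ.unique_edge c i
  have h1 : ((a, b, d) : V × V × Bool) = E := huniq _ ⟨hc1.imp Eq.symm Eq.symm, hab⟩
  have h2 : ((p, q, e) : V × V × Bool) = E := huniq _ ⟨hc2, hpq⟩
  have h3 := h2.trans h1.symm
  simpa [Prod.ext_iff] using h3

lemma coeff_zero (hρ : WDigraphRep cs ha Γ ρ) {i : B} {a b c : V} {d : Bool}
    (hab : Γ.Edge a b i d) (hc : c = a ∨ c = b) {x : V} (hxa : x ≠ a) (hxb : x ≠ b) :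
    (ρ (ha.T (cs.simple i)) (single x (1 : Kq))) c = 0 := by
  obtain ⟨⟨p, q, e⟩, ⟨hinc, hedge⟩, -⟩ := Γ.unique_edge x i
  have hnotp : c ≠ p := by
    intro hcp
    obtain ⟨h1, h2, -⟩ := edge_unique hab hedge hc (Or.inl hcp.symm)
    rcases hinc with h | h
    · exact hxa (h.symm.trans h1)
    · exact hxb (h.symm.trans h2)
  have hnotq : c ≠ q := by
    intro hcq
    obtain ⟨h1, h2, -⟩ := edge_unique hab hedge hc (Or.inr hcq.symm)
    rcases hinc with h | h
    · exact hxa (h.symm.trans h1)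
    · exact hxb (h.symm.trans h2)
  rcases hinc with rfl | rfl <;> cases e
  · obtain ⟨h1, -⟩ := (hρ p q i).1 hedge
    rw [h1]
    simp [Finsupp.single_apply, Ne.symm hnotq]
  · obtain ⟨h1, -⟩ := (hρ p q i).2 hedge
    rw [h1]
    simp [Finsupp.single_apply, Ne.symm hnotq, Ne.symm hnotp]
  · obtain ⟨-, h2⟩ := (hρ p q i).1 hedge
    rw [h2]
    simp [Finsupp.single_apply, Ne.symm hnotq, Ne.symm hnotp]
  · obtain ⟨-, h2⟩ := (hρ p q i).2 hedge
    rw [h2]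
    simp [Finsupp.single_apply, Ne.symm hnotq, Ne.symm hnotp]

lemma apply_eq_zero (T : Module.End Kq (V →₀ Kq)) (w : V →₀ Kq) (c : V)
    (h : ∀ x ∈ w.support, (T (single x (1 : Kq))) c = 0) : (T w) c = 0 := by
  have hw : w = w.sum (fun x cc => cc • single x (1 : Kq)) := by
    simp [Finsupp.smul_single, Finsupp.sum_single]
  rw [hw, map_finsuppSum, Finsupp.sum_apply, Finsupp.sum]
  apply Finset.sum_eq_zero
  intro x hx
  rw [map_smul, Finsupp.smul_apply, h x hx, smul_zero]

lemma Ts_apply (hρ : WDigraphRep cs ha Γ ρ) {i : B} {a b : V} {d : Bool}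
    (hab : Γ.Edge a b i d) (v : V →₀ Kq) {c : V} (hc : c = a ∨ c = b) :
    (ρ (ha.T (cs.simple i)) v) c
      = v a * (ρ (ha.T (cs.simple i)) (single a (1 : Kq))) c
        + v b * (ρ (ha.T (cs.simple i)) (single b (1 : Kq))) c := by
  set T := ρ (ha.T (cs.simple i)) with hT
  have hne : a ≠ b := fun h => Γ.no_loop a i d (h ▸ hab)
  set w := (v.erase a).erase b with hw
  have hv : v = w + single b (v b) + single a (v a) := by
    have h3 : (v.erase a) b = v b := Finsupp.erase_ne (Ne.symm hne)
    calc v = v.erase a + single a (v a) := (Finsupp.erase_add_single a v).symm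
      _ = ((v.erase a).erase b + single b ((v.erase a) b)) + single a (v a) := by
          conv_lhs => rw [← Finsupp.erase_add_single b (v.erase a)]
      _ = w + single b (v b) + single a (v a) := by rw [h3, hw]
  have hwz : (T w) c = 0 := by
    apply apply_eq_zero
    intro x hx
    have hx' : w x ≠ 0 := Finsupp.mem_support_iff.mp hx
    have hxb : x ≠ b := by
      rintro rfl
      exact hx' (by rw [hw]; exact Finsupp.erase_same)
    have hxa : x ≠ a := by
      rintro rfl
      exact hx' (by rw [hw, Finsupp.erase_ne hxb]; exact Finsupp.erase_same)
    exact coeff_zero hρ hab hc hxa hxb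
  have hsb : single b (v b) = v b • single b (1 : Kq) := by
    rw [Finsupp.smul_single, smul_eq_mul, mul_one]
  have hsa : single a (v a) = v a • single a (1 : Kq) := by
    rw [Finsupp.smul_single, smul_eq_mul, mul_one]
  conv_lhs => rw [hv]
  rw [map_add, map_add, hsb, hsa, map_smul, map_smul]
  simp only [Finsupp.add_apply, Finsupp.smul_apply, smul_eq_mul, hwz]
  ring

end EigenAux

/-- Lemma `eigenvalues`.  Let `M(Γ)` be the `H`-module with
basis the vertex set `X` of the `W`-digraph `Γ`, let
`v = Σ_{γ ∈ X} λ_γ γ` (so `λ_γ = v γ`), and let `s ∈ S`.  Then: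
(i) `T_s v = u² v` iff `λ_β = λ_α` whenever `Γ` has an edge (solid or dashed)
from `α` to `β` labeled `s`;
(ii) `T_s v = -v` iff `λ_β = -u⁻² λ_α` for every solid edge `α → β` labeled
`s` and `λ_β = -(u+1)(u²-u)⁻¹ λ_α` for every dashed edge `α → β` labeled `s`. -/
theorem wdigraph_eigenvalue_conditions {V : Type*}
    (cs : CoxeterSystem M W) (ha : HeckeAlgebra cs H)
    (Γ : SLabeledDigraph V B)
    (ρ : H →ₐ[Kq] Module.End Kq (V →₀ Kq)) (hρ : WDigraphRep cs ha Γ ρ)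
    (v : V →₀ Kq) (i : B) :
    (ρ (ha.T (cs.simple i)) v = uu ^ 2 • v ↔
      ∀ (a b : V) (d : Bool), Γ.Edge a b i d → v b = v a) ∧
    (ρ (ha.T (cs.simple i)) v = - v ↔
      ∀ a b : V,
        (Γ.Edge a b i false → v b = - (uu ^ 2)⁻¹ * v a) ∧
        (Γ.Edge a b i true → v b = - (uu + 1) * (uu ^ 2 - uu)⁻¹ * v a)) := by
  constructor
  · constructor
    · intro heq a b d hab
      have hne : a ≠ b := fun h => Γ.no_loop a i d (h ▸ hab)
      have hva := DFunLike.congr_fun heq a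
      rw [Ts_apply hρ hab v (Or.inl rfl)] at hva
      cases d
      · obtain ⟨h1, h2⟩ := (hρ a b i).1 hab
        rw [h1, h2] at hva
        simp [Finsupp.single_apply, Ne.symm hne, hne] at hva
        have h2' : uu ^ 2 * v b = uu ^ 2 * v a := by linear_combination hva
        exact mul_left_cancel₀ uu_sq_ne_zero h2'
      · obtain ⟨h1, h2⟩ := (hρ a b i).2 hab
        rw [h1, h2] at hva
        simp [Finsupp.single_apply, Ne.symm hne, hne] at hva
        have h2' : (uu ^ 2 - uu) * v b = (uu ^ 2 - uu) * v a := by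
          linear_combination hva
        exact mul_left_cancel₀ uu_sq_sub_uu_ne_zero h2'
    · intro hcond
      ext c
      obtain ⟨⟨p, q, e⟩, ⟨hinc, hedge⟩, -⟩ := Γ.unique_edge c i
      have hne : p ≠ q := fun h => Γ.no_loop p i e (h ▸ hedge)
      have hval := hcond p q e hedge
      rw [Ts_apply hρ hedge v (hinc.imp Eq.symm Eq.symm)]
      cases e
      · obtain ⟨h1, h2⟩ := (hρ p q i).1 hedge
        rw [h1, h2]
        rcases hinc with rfl | rfl <;>
          · simp [Finsupp.single_apply, Ne.symm hne, hne]
            try first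
            | linear_combination hval
            | linear_combination - hval
            | linear_combination uu ^ 2 * hval
            | linear_combination (- uu ^ 2) * hval
            | linear_combination (uu ^ 2 - uu) * hval
            | linear_combination (- (uu ^ 2 - uu)) * hval
            | linear_combination (uu + 1) * hval
            | linear_combination (- (uu + 1)) * hval
      · obtain ⟨h1, h2⟩ := (hρ p q i).2 hedge
        rw [h1, h2]
        rcases hinc with rfl | rfl <;>
          · simp [Finsupp.single_apply, Ne.symm hne, hne]
            try first
            | linear_combination hval
            | linear_combination - hval
            | linear_combination uu ^ 2 * hval
            | linear_combination (- uu ^ 2) * hval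
            | linear_combination (uu ^ 2 - uu) * hval
            | linear_combination (- (uu ^ 2 - uu)) * hval
            | linear_combination (uu + 1) * hval
            | linear_combination (- (uu + 1)) * hval
  · constructor
    · intro heq a b
      constructor
      · intro hab
        have hne : a ≠ b := fun h => Γ.no_loop a i false (h ▸ hab)
        have hva := DFunLike.congr_fun heq a
        rw [Ts_apply hρ hab v (Or.inl rfl)] at hva
        obtain ⟨h1, h2⟩ := (hρ a b i).1 hab
        rw [h1, h2] at hva
        simp [Finsupp.single_apply, Ne.symm hne, hne, Finsupp.neg_apply] at hva
        have hvb : v b = (v b * uu ^ 2) * (uu ^ 2)⁻¹ := by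
          rw [mul_assoc, mul_inv_cancel₀ uu_sq_ne_zero, mul_one]
        rw [hvb, show v b * uu ^ 2 = - v a by linear_combination hva]
        ring
      · intro hab
        have hne : a ≠ b := fun h => Γ.no_loop a i true (h ▸ hab)
        have hva := DFunLike.congr_fun heq a
        rw [Ts_apply hρ hab v (Or.inl rfl)] at hva
        obtain ⟨h1, h2⟩ := (hρ a b i).2 hab
        rw [h1, h2] at hva
        simp [Finsupp.single_apply, Ne.symm hne, hne, Finsupp.neg_apply] at hva
        have hvb : v b = (v b * (uu ^ 2 - uu)) * (uu ^ 2 - uu)⁻¹ := by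
          rw [mul_assoc, mul_inv_cancel₀ uu_sq_sub_uu_ne_zero, mul_one]
        rw [hvb, show v b * (uu ^ 2 - uu) = -(uu + 1) * v a by linear_combination hva]
        ring
    · intro hcond
      ext c
      obtain ⟨⟨p, q, e⟩, ⟨hinc, hedge⟩, -⟩ := Γ.unique_edge c i
      have hne : p ≠ q := fun h => Γ.no_loop p i e (h ▸ hedge)
      rw [Ts_apply hρ hedge v (hinc.imp Eq.symm Eq.symm)]
      cases e
      · have hval := (hcond p q).1 hedge
        field_simp [uu_sq_ne_zero] at hval
        replace hval : v q * uu ^ 2 = -v p := by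
          rw [hval, neg_mul, div_mul_cancel₀ _ uu_sq_ne_zero]
        obtain ⟨h1, h2⟩ := (hρ p q i).1 hedge
        rw [h1, h2]
        rcases hinc with rfl | rfl <;>
          · simp [Finsupp.single_apply, Ne.symm hne, hne, Finsupp.neg_apply]
            try first
            | linear_combination hval
            | linear_combination - hval
            | linear_combination uu ^ 2 * hval
            | linear_combination (- uu ^ 2) * hval
      · have hval := (hcond p q).2 hedge
        field_simp [uu_sq_sub_uu_ne_zero] at hval
        replace hval : v q * (uu ^ 2 - uu) = -((uu + 1) * v p) := by
          rw [hval, show uu ^ 2 - uu = uu * (uu - 1) by ring, neg_mul,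
            div_mul_cancel₀ _ (mul_ne_zero uu_ne_zero uu_sub_one_ne_zero)]
        obtain ⟨h1, h2⟩ := (hρ p q i).2 hedge
        rw [h1, h2]
        rcases hinc with rfl | rfl <;>
          · simp [Finsupp.single_apply, Ne.symm hne, hne, Finsupp.neg_apply]
            try first
            | linear_combination hval
            | linear_combination - hval
            | linear_combination uu * hval
            | linear_combination (- uu) * hval
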